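/- Let τ : ℤ × ℝ² → ℝ, written (n, T₁, T₂) ↦ τ(n), be nowhere zero and twice continuously differentiable in (T₁, T₂). Define v(n) = τ(n+1)τ(n−1)/τ(n)² and f₀(n) = v(n)·(∂_{T₁}τ(n+1)/τ(n+1) − ∂_{T₁}τ(n−1)/τ(n−1)). Then for each n and (T₁, T₂) the second equation of the Toda lattice of type B, ∂_{T₂}v(n) − ∂_{T₁}f₀(n) + 2v(n)²(v(n+1) − v(n−1)) = 0, holds if and only if τ satisfies the equation ∂_{T₂}log(τ(n−1)τ(n+1)/τ(n)²) + ∂²_{T₁}log(τ(n−1)/τ(n+1)) + ∂_{T₁}log(τ(n−1)τ(n+1)/τ(n)²) · ∂_{T₁}log(τ(n−1)/τ(n+1)) = 2τ(n−2)τ(n+1)/(τ(n−1)τ(n)) − 2τ(n+2)τ(n−1)/(τ(n+1)τ(n)), where for a nonvanishing differentiable function F, ∂ log F denotes ∂F/F (so the identity is understood with all logarithmic derivatives written as quotients of derivatives by the functions themselves). -/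

import Mathlib

/-- Partial derivative in the first time variable `T₁` (real-valued). -/
noncomputable def dT1 (u : ℝ × ℝ → ℝ) (p : ℝ × ℝ) : ℝ :=
  deriv (fun t => u (t, p.2)) p.1

/-- Partial derivative in the second time variable `T₂` (real-valued). -/
noncomputable def dT2 (u : ℝ × ℝ → ℝ) (p : ℝ × ℝ) : ℝ :=
  deriv (fun t => u (p.1, t)) p.2

lemma hasDerivAt_slice1 {u : ℝ × ℝ → ℝ} {p : ℝ × ℝ} (hu : DifferentiableAt ℝ u p) :
    HasDerivAt (fun t => u (t, p.2)) (fderiv ℝ u p (1, 0)) p.1 := by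
  have hg : HasDerivAt (fun t : ℝ => ((t, p.2) : ℝ × ℝ)) (1, 0) p.1 :=
    HasDerivAt.prodMk (hasDerivAt_id p.1) (hasDerivAt_const p.1 p.2)
  have hf : HasFDerivAt u (fderiv ℝ u p) (p.1, p.2) := by
    rw [Prod.mk.eta]; exact hu.hasFDerivAt
  exact hf.comp_hasDerivAt p.1 hg

lemma hasDerivAt_slice2 {u : ℝ × ℝ → ℝ} {p : ℝ × ℝ} (hu : DifferentiableAt ℝ u p) :
    HasDerivAt (fun t => u (p.1, t)) (fderiv ℝ u p (0, 1)) p.2 := by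
  have hg : HasDerivAt (fun t : ℝ => ((p.1, t) : ℝ × ℝ)) (0, 1) p.2 :=
    HasDerivAt.prodMk (hasDerivAt_const p.2 p.1) (hasDerivAt_id p.2)
  have hf : HasFDerivAt u (fderiv ℝ u p) (p.1, p.2) := by
    rw [Prod.mk.eta]; exact hu.hasFDerivAt
  exact hf.comp_hasDerivAt p.2 hg

lemma hasDerivAt_dT1_slice {u : ℝ × ℝ → ℝ} {p : ℝ × ℝ} (hu : DifferentiableAt ℝ u p) :
    HasDerivAt (fun t => u (t, p.2)) (dT1 u p) p.1 := by
  have h := hasDerivAt_slice1 hu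
  unfold dT1; rw [h.deriv]; exact h

lemma hasDerivAt_dT2_slice {u : ℝ × ℝ → ℝ} {p : ℝ × ℝ} (hu : DifferentiableAt ℝ u p) :
    HasDerivAt (fun t => u (p.1, t)) (dT2 u p) p.2 := by
  have h := hasDerivAt_slice2 hu
  unfold dT2; rw [h.deriv]; exact h

lemma dT1_differentiable {u : ℝ × ℝ → ℝ} (hu : ContDiff ℝ 2 u) :
    Differentiable ℝ (fun q => dT1 u q) := by
  have h1 : (fun q => dT1 u q) = fun q => fderiv ℝ u q (1, 0) := by
    funext q
    exact (hasDerivAt_slice1 ((hu.differentiable (by norm_num)) q)).deriv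
  rw [h1]
  have h2 : ContDiff ℝ 1 (fun q => fderiv ℝ u q) := hu.fderiv_right (by norm_num)
  exact (h2.clm_apply contDiff_const).differentiable (by norm_num)

set_option maxHeartbeats 4000000 in
/-- the second equation of the Toda lattice of type B is
equivalent, for `v`, `f₀` expressed through a nowhere vanishing tau-function
`τ`, to the cubic (in `τ`) equation, with all logarithmic derivatives
written as quotients of derivatives by the functions themselves. -/
theorem typeB_second_equation_tau_form
    (τ : ℤ → ℝ × ℝ → ℝ)
    (hτne : ∀ (n : ℤ) (p : ℝ × ℝ), τ n p ≠ 0)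
    (hτ : ∀ n : ℤ, ContDiff ℝ 2 (fun p : ℝ × ℝ => τ n p))
    (v f₀ : ℤ → ℝ × ℝ → ℝ)
    (hv : ∀ (n : ℤ) (p : ℝ × ℝ),
      v n p = τ (n + 1) p * τ (n - 1) p / (τ n p) ^ 2)
    (hf₀ : ∀ (n : ℤ) (p : ℝ × ℝ),
      f₀ n p = v n p * (dT1 (τ (n + 1)) p / τ (n + 1) p
        - dT1 (τ (n - 1)) p / τ (n - 1) p)) :
    ∀ (n : ℤ) (p : ℝ × ℝ),
      (dT2 (v n) p - dT1 (f₀ n) p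
          + 2 * (v n p) ^ 2 * (v (n + 1) p - v (n - 1) p) = 0)
        ↔ (dT2 (fun q => τ (n - 1) q * τ (n + 1) q / (τ n q) ^ 2) p
              / (τ (n - 1) p * τ (n + 1) p / (τ n p) ^ 2)
            + dT1 (fun q => dT1 (fun r => τ (n - 1) r / τ (n + 1) r) q
                / (τ (n - 1) q / τ (n + 1) q)) p
            + (dT1 (fun q => τ (n - 1) q * τ (n + 1) q / (τ n q) ^ 2) p
                / (τ (n - 1) p * τ (n + 1) p / (τ n p) ^ 2))
              * (dT1 (fun q => τ (n - 1) q / τ (n + 1) q) p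
                / (τ (n - 1) p / τ (n + 1) p))
          = 2 * (τ (n - 2) p * τ (n + 1) p) / (τ (n - 1) p * τ n p)
            - 2 * (τ (n + 2) p * τ (n - 1) p) / (τ (n + 1) p * τ n p)) := by
  intro n p
  have hdiff : ∀ m : ℤ, Differentiable ℝ (τ m) := fun m => (hτ m).differentiable (by norm_num)
  have hBq : ∀ (m : ℤ) (q : ℝ × ℝ),
      HasDerivAt (fun t => τ m (t, q.2)) (dT1 (τ m) q) q.1 :=
    fun m q => hasDerivAt_dT1_slice (hdiff m q)
  have hB : ∀ m : ℤ, HasDerivAt (fun t => τ m (t, p.2)) (dT1 (τ m) p) p.1 := fun m => hBq m p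
  have hC : ∀ m : ℤ, HasDerivAt (fun t => τ m (p.1, t)) (dT2 (τ m) p) p.2 :=
    fun m => hasDerivAt_dT2_slice (hdiff m p)
  have hD : ∀ m : ℤ,
      HasDerivAt (fun t => dT1 (τ m) (t, p.2)) (dT1 (fun r => dT1 (τ m) r) p) p.1 :=
    fun m => hasDerivAt_dT1_slice ((dT1_differentiable (hτ m)) p)
  -- E1 : dT2 of v n
  have E1 : dT2 (v n) p =
      ((dT2 (τ (n+1)) p * τ (n-1) p + τ (n+1) p * dT2 (τ (n-1)) p) * τ n p ^ 2
        - τ (n+1) p * τ (n-1) p * (2 * τ n p * dT2 (τ n) p)) / τ n p ^ 4 := by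
    have hfun : (fun t => v n (p.1, t))
        = fun t => τ (n+1) (p.1, t) * τ (n-1) (p.1, t) / τ n (p.1, t) ^ 2 := by
      funext t; exact hv n (p.1, t)
    have H := ((hC (n+1)).mul (hC (n-1))).div ((hC n).pow 2)
      (pow_ne_zero 2 (hτne n (p.1, p.2)))
    simp only [Pi.mul_def, Pi.div_def, Pi.sub_def, Pi.pow_def] at H
    rw [show dT2 (v n) p = deriv (fun t => v n (p.1, t)) p.2 from rfl, hfun, H.deriv]
    simp only [Prod.mk.eta]
    norm_num
    ring
  -- E1b : dT2 of the tau-expression (reversed order)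
  have E1b : dT2 (fun q => τ (n - 1) q * τ (n + 1) q / (τ n q) ^ 2) p =
      ((dT2 (τ (n-1)) p * τ (n+1) p + τ (n-1) p * dT2 (τ (n+1)) p) * τ n p ^ 2
        - τ (n-1) p * τ (n+1) p * (2 * τ n p * dT2 (τ n) p)) / τ n p ^ 4 := by
    have H := ((hC (n-1)).mul (hC (n+1))).div ((hC n).pow 2)
      (pow_ne_zero 2 (hτne n (p.1, p.2)))
    simp only [Pi.mul_def, Pi.div_def, Pi.sub_def, Pi.pow_def] at H
    rw [show dT2 (fun q => τ (n - 1) q * τ (n + 1) q / (τ n q) ^ 2) p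
        = deriv (fun t => τ (n-1) (p.1, t) * τ (n+1) (p.1, t) / τ n (p.1, t) ^ 2) p.2 from rfl,
      H.deriv]
    simp only [Prod.mk.eta]
    norm_num
    ring
  -- E4 : dT1 of the tau-expression
  have E4 : dT1 (fun q => τ (n - 1) q * τ (n + 1) q / (τ n q) ^ 2) p =
      ((dT1 (τ (n-1)) p * τ (n+1) p + τ (n-1) p * dT1 (τ (n+1)) p) * τ n p ^ 2
        - τ (n-1) p * τ (n+1) p * (2 * τ n p * dT1 (τ n) p)) / τ n p ^ 4 := by
    have H := ((hB (n-1)).mul (hB (n+1))).div ((hB n).pow 2)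
      (pow_ne_zero 2 (hτne n (p.1, p.2)))
    simp only [Pi.mul_def, Pi.div_def, Pi.sub_def, Pi.pow_def] at H
    rw [show dT1 (fun q => τ (n - 1) q * τ (n + 1) q / (τ n q) ^ 2) p
        = deriv (fun t => τ (n-1) (t, p.2) * τ (n+1) (t, p.2) / τ n (t, p.2) ^ 2) p.1 from rfl,
      H.deriv]
    simp only [Prod.mk.eta]
    norm_num
    ring
  -- hg : pointwise formula for dT1 of the ratio
  have hg : ∀ q : ℝ × ℝ, dT1 (fun r => τ (n - 1) r / τ (n + 1) r) q =
      (dT1 (τ (n-1)) q * τ (n+1) q - τ (n-1) q * dT1 (τ (n+1)) q) / τ (n+1) q ^ 2 := by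
    intro q
    have H := (hBq (n-1) q).div (hBq (n+1) q) (hτne (n+1) (q.1, q.2))
    simp only [Pi.mul_def, Pi.div_def, Pi.sub_def, Pi.pow_def] at H
    rw [show dT1 (fun r => τ (n - 1) r / τ (n + 1) r) q
        = deriv (fun t => τ (n-1) (t, q.2) / τ (n+1) (t, q.2)) q.1 from rfl, H.deriv]
  -- E2 : dT1 of f₀ n
  have E2 : dT1 (f₀ n) p =
      ((dT1 (τ (n+1)) p * τ (n-1) p + τ (n+1) p * dT1 (τ (n-1)) p) * τ n p ^ 2
        - τ (n+1) p * τ (n-1) p * (2 * τ n p * dT1 (τ n) p)) / τ n p ^ 4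
        * (dT1 (τ (n+1)) p / τ (n+1) p - dT1 (τ (n-1)) p / τ (n-1) p)
      + τ (n+1) p * τ (n-1) p / τ n p ^ 2
        * ((dT1 (fun r => dT1 (τ (n+1)) r) p * τ (n+1) p - dT1 (τ (n+1)) p * dT1 (τ (n+1)) p) / τ (n+1) p ^ 2
          - (dT1 (fun r => dT1 (τ (n-1)) r) p * τ (n-1) p - dT1 (τ (n-1)) p * dT1 (τ (n-1)) p) / τ (n-1) p ^ 2) := by
    have hfun : (fun t => f₀ n (t, p.2))
        = fun t => τ (n+1) (t, p.2) * τ (n-1) (t, p.2) / τ n (t, p.2) ^ 2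
            * (dT1 (τ (n+1)) (t, p.2) / τ (n+1) (t, p.2)
              - dT1 (τ (n-1)) (t, p.2) / τ (n-1) (t, p.2)) := by
      funext t; rw [hf₀ n (t, p.2), hv n (t, p.2)]
    have HV := ((hB (n+1)).mul (hB (n-1))).div ((hB n).pow 2) (pow_ne_zero 2 (hτne n (p.1, p.2)))
    have HW := ((hD (n+1)).div (hB (n+1)) (hτne (n+1) (p.1, p.2))).sub
      ((hD (n-1)).div (hB (n-1)) (hτne (n-1) (p.1, p.2)))
    have H := HV.mul HW
    simp only [Pi.mul_def, Pi.div_def, Pi.sub_def, Pi.pow_def] at H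
    rw [show dT1 (f₀ n) p = deriv (fun t => f₀ n (t, p.2)) p.1 from rfl, hfun, H.deriv]
    simp only [Prod.mk.eta, Nat.cast_ofNat, show (2-1:ℕ) = 1 from rfl, pow_one]
    ring
  -- E3 : dT1 of the log-derivative quotient
  have E3 : dT1 (fun q => dT1 (fun r => τ (n - 1) r / τ (n + 1) r) q
        / (τ (n - 1) q / τ (n + 1) q)) p =
      ((((dT1 (fun r => dT1 (τ (n-1)) r) p * τ (n+1) p + dT1 (τ (n-1)) p * dT1 (τ (n+1)) p
          - (dT1 (τ (n-1)) p * dT1 (τ (n+1)) p + τ (n-1) p * dT1 (fun r => dT1 (τ (n+1)) r) p)) * τ (n+1) p ^ 2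
          - (dT1 (τ (n-1)) p * τ (n+1) p - τ (n-1) p * dT1 (τ (n+1)) p)
            * (2 * τ (n+1) p * dT1 (τ (n+1)) p)) / τ (n+1) p ^ 4)
          * (τ (n-1) p / τ (n+1) p)
        - ((dT1 (τ (n-1)) p * τ (n+1) p - τ (n-1) p * dT1 (τ (n+1)) p) / τ (n+1) p ^ 2)
          * ((dT1 (τ (n-1)) p * τ (n+1) p - τ (n-1) p * dT1 (τ (n+1)) p) / τ (n+1) p ^ 2))
        / (τ (n-1) p / τ (n+1) p) ^ 2 := by
    have hfun : (fun t => dT1 (fun r => τ (n - 1) r / τ (n + 1) r) (t, p.2)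
          / (τ (n - 1) (t, p.2) / τ (n + 1) (t, p.2)))
        = fun t => (dT1 (τ (n-1)) (t, p.2) * τ (n+1) (t, p.2)
            - τ (n-1) (t, p.2) * dT1 (τ (n+1)) (t, p.2)) / τ (n+1) (t, p.2) ^ 2
            / (τ (n-1) (t, p.2) / τ (n+1) (t, p.2)) := by
      funext t; rw [hg (t, p.2)]
    have hN := (((hD (n-1)).mul (hB (n+1))).sub ((hB (n-1)).mul (hD (n+1)))).div
      ((hB (n+1)).pow 2) (pow_ne_zero 2 (hτne (n+1) (p.1, p.2)))
    have hR := (hB (n-1)).div (hB (n+1)) (hτne (n+1) (p.1, p.2))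
    have H := hN.div hR (div_ne_zero (hτne (n-1) (p.1, p.2)) (hτne (n+1) (p.1, p.2)))
    simp only [Pi.mul_def, Pi.div_def, Pi.sub_def, Pi.pow_def] at H
    rw [show dT1 (fun q => dT1 (fun r => τ (n - 1) r / τ (n + 1) r) q
          / (τ (n - 1) q / τ (n + 1) q)) p
        = deriv (fun t => dT1 (fun r => τ (n - 1) r / τ (n + 1) r) (t, p.2)
          / (τ (n - 1) (t, p.2) / τ (n + 1) (t, p.2))) p.1 from rfl, hfun, H.deriv]
    simp only [Prod.mk.eta]
    norm_num
    ring
  have hvne : ¬ v n p = 0 := by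
    rw [hv]
    exact div_ne_zero (mul_ne_zero (hτne _ _) (hτne _ _)) (pow_ne_zero _ (hτne _ _))
  have i1 : n + 1 + 1 = n + 2 := by ring
  have i2 : n + 1 - 1 = n := by ring
  have i3 : n - 1 + 1 = n := by ring
  have i4 : n - 1 - 1 = n - 2 := by ring
  have hkey : dT2 (v n) p - dT1 (f₀ n) p
        + 2 * (v n p) ^ 2 * (v (n + 1) p - v (n - 1) p)
      = v n p * ((dT2 (fun q => τ (n - 1) q * τ (n + 1) q / (τ n q) ^ 2) p
              / (τ (n - 1) p * τ (n + 1) p / (τ n p) ^ 2)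
            + dT1 (fun q => dT1 (fun r => τ (n - 1) r / τ (n + 1) r) q
                / (τ (n - 1) q / τ (n + 1) q)) p
            + (dT1 (fun q => τ (n - 1) q * τ (n + 1) q / (τ n q) ^ 2) p
                / (τ (n - 1) p * τ (n + 1) p / (τ n p) ^ 2))
              * (dT1 (fun q => τ (n - 1) q / τ (n + 1) q) p
                / (τ (n - 1) p / τ (n + 1) p)))
          - (2 * (τ (n - 2) p * τ (n + 1) p) / (τ (n - 1) p * τ n p)
            - 2 * (τ (n + 2) p * τ (n - 1) p) / (τ (n + 1) p * τ n p))) := by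
    rw [E1, E2, E1b, E3, E4, hg p, hv n p, hv (n+1) p, hv (n-1) p]
    rw [i1, i2, i3, i4]
    have h0 := hτne n p
    have hm1 := hτne (n-1) p
    have hp1 := hτne (n+1) p
    have hm2 := hτne (n-2) p
    have hp2 := hτne (n+2) p
    field_simp
    ring
  rw [hkey, mul_eq_zero, sub_eq_zero, or_iff_right hvne]
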